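/- Let C be a ℤ-submodule of (ℤ/2ℤ)^n. Then for every real q with 0 ≤ q < 1, ∑_{x ∈ Λ_A(C)} q^{‖x‖₁} = (1 − q²)^{−n} · ∑_{c ∈ C} (1 + q²)^{n − |c|} (2q)^{|c|}, where |c| = #{i : cᵢ ≠ 0} is the Hamming weight of c. -/

import Mathlib

noncomputable def evenEquiv : ℤ ≃ {m : ℤ // (m : ZMod 2) = 0} where
  toFun k := ⟨2 * k, by push_cast; simp [show (2:ZMod 2) = 0 by decide]⟩
  invFun m := m.1 / 2
  left_inv k := Int.mul_ediv_cancel_left k two_ne_zero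
  right_inv m := Subtype.ext (Int.mul_ediv_cancel'
    ((ZMod.intCast_zmod_eq_zero_iff_dvd m.1 2).mp m.2))

noncomputable def oddEquiv : ℤ ≃ {m : ℤ // (m : ZMod 2) = 1} where
  toFun k := ⟨2 * k + 1, by push_cast; simp [show (2:ZMod 2) = 0 by decide]⟩
  invFun m := (m.1 - 1) / 2
  left_inv k := by show (2 * k + 1 - 1) / 2 = k; omega
  right_inv m := by
    have h2 : (2 : ℤ) ∣ (m.1 - 1) := by
      have := (ZMod.intCast_zmod_eq_zero_iff_dvd (m.1 - 1) 2).mp (by push_cast [m.2]; ring)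
      exact_mod_cast this
    exact Subtype.ext (show 2 * ((m.1 - 1) / 2) + 1 = m.1 by omega)

lemma coord_hasSum {q : ℝ} (hq0 : 0 ≤ q) (hq1 : q < 1) (ε : ZMod 2) :
    HasSum (fun m : {m : ℤ // (m : ZMod 2) = ε} => q ^ (m : ℤ).natAbs)
      ((if ε = 0 then 1 + q ^ 2 else 2 * q) * (1 - q ^ 2)⁻¹) := by
  have hr0 : (0:ℝ) ≤ q ^ 2 := sq_nonneg q
  have hr1 : q ^ 2 < 1 := by nlinarith
  have hgeo : HasSum (fun n : ℕ => (q ^ 2) ^ n) (1 - q ^ 2)⁻¹ :=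
    hasSum_geometric_of_lt_one hr0 hr1
  have hε : ε = 0 ∨ ε = 1 := by
    fin_cases ε
    · exact Or.inl rfl
    · exact Or.inr rfl
  rcases hε with rfl | rfl
  · simp only [if_pos rfl]
    refine (evenEquiv.hasSum_iff).mp ?_
    have key : HasSum (fun k : ℤ => q ^ (2 * k).natAbs)
        ((1 - q^2)⁻¹ + q^2 * (1 - q^2)⁻¹) := by
      have h1 : HasSum (fun n : ℕ => (q^2)^n) ((1 - q^2)⁻¹) := hgeo
      have h2 : HasSum (fun n : ℕ => q^2 * (q^2)^n) (q^2 * (1 - q^2)⁻¹) := hgeo.mul_left _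
      have := h1.int_rec h2
      convert this using 1
      funext k
      cases k with
      | ofNat n => simp [Int.natAbs_mul, pow_mul]
      | negSucc n =>
        show q ^ (2 * Int.negSucc n).natAbs = q ^ 2 * (q ^ 2) ^ n
        have : (2 * Int.negSucc n).natAbs = 2 * (n + 1) := by
          simp [Int.natAbs_mul]
        rw [this, pow_mul, pow_succ]; ring
    convert key using 1
    · rfl
    · norm_num; ring
  · simp only [one_ne_zero, if_neg (by decide : (1 : ZMod 2) ≠ 0)]
    refine (oddEquiv.hasSum_iff).mp ?_
    have key : HasSum (fun k : ℤ => q ^ (2 * k + 1).natAbs)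
        (q * (1 - q^2)⁻¹ + q * (1 - q^2)⁻¹) := by
      have h1 : HasSum (fun n : ℕ => q * (q^2)^n) (q * (1 - q^2)⁻¹) := hgeo.mul_left _
      have := h1.int_rec h1
      convert this using 1
      funext k
      cases k with
      | ofNat n =>
        show q ^ (2 * (n:ℤ) + 1).natAbs = q * (q ^ 2) ^ n
        have : (2 * (n:ℤ) + 1).natAbs = 2 * n + 1 := by omega
        rw [this, pow_succ, pow_mul]; ring
      | negSucc n =>
        show q ^ (2 * Int.negSucc n + 1).natAbs = q * (q ^ 2) ^ n
        have : (2 * Int.negSucc n + 1).natAbs = 2 * n + 1 := by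
          simp [Int.negSucc_eq]; omega
        rw [this, pow_succ, pow_mul]; ring
    convert key using 1
    · rfl
    · norm_num; ring

lemma hasSum_pi_fin : ∀ (n : ℕ) (α : Fin n → Type) (f : ∀ i, α i → ℝ) (s : Fin n → ℝ),
    (∀ i, HasSum (f i) (s i)) → (∀ i a, 0 ≤ f i a) →
    HasSum (fun x : ∀ i, α i => ∏ i, f i (x i)) (∏ i, s i) := by
  intro n
  induction n with
  | zero =>
    intro α f s h hnn
    have : HasSum (fun x : ∀ i : Fin 0, α i => ∏ i, f i (x i))
        ((fun x : ∀ i : Fin 0, α i => ∏ i, f i (x i)) (fun i => i.elim0)) :=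
      hasSum_single _ (fun b' hb' => absurd (funext fun i => i.elim0) hb')
    simpa using this
  | succ n ih =>
    intro α f s h hnn
    have h0 := h 0
    have hrest := ih (fun i => α i.succ) (fun i => f i.succ) (fun i => s i.succ)
      (fun i => h i.succ) (fun i a => hnn i.succ a)
    have hsummable : Summable fun p : α 0 × (∀ i : Fin n, α i.succ) =>
        f 0 p.1 * ∏ i, f i.succ (p.2 i) := by
      apply summable_mul_of_summable_norm (f := fun a => f 0 a)
        (g := fun y : ∀ i : Fin n, α i.succ => ∏ i, f i.succ (y i))
      · simpa only [Real.norm_eq_abs] using h0.summable.abs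
      · simpa only [Real.norm_eq_abs] using hrest.summable.abs
    have hmul := h0.mul hrest hsummable
    refine (Fin.consEquiv α).hasSum_iff.mp ?_
    have hfun : ((fun x : ∀ i, α i => ∏ i, f i (x i)) ∘ (Fin.consEquiv α)) =
        fun p : α 0 × (∀ i : Fin n, α i.succ) => f 0 p.1 * ∏ i, f i.succ (p.2 i) := by
      funext p
      simp [Fin.consEquiv, Fin.prod_univ_succ]
    rw [hfun, Fin.prod_univ_succ]
    exact hmul

lemma fiber_hasSum {q : ℝ} (hq0 : 0 ≤ q) (hq1 : q < 1) {n : ℕ} (c : Fin n → ZMod 2) :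
    HasSum (fun y : ∀ i, {m : ℤ // (m : ZMod 2) = c i} => q ^ (∑ i, ((y i : ℤ)).natAbs))
      ((1 - q ^ 2)⁻¹ ^ n *
        ((1 + q ^ 2) ^ (n - (Finset.univ.filter fun i => c i ≠ 0).card) *
          (2 * q) ^ (Finset.univ.filter fun i => c i ≠ 0).card)) := by
  have key := hasSum_pi_fin n (fun i => {m : ℤ // (m : ZMod 2) = c i})
    (fun i m => q ^ (m : ℤ).natAbs)
    (fun i => (if c i = 0 then 1 + q ^ 2 else 2 * q) * (1 - q ^ 2)⁻¹)
    (fun i => coord_hasSum hq0 hq1 (c i))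
    (fun i a => pow_nonneg hq0 _)
  have hfun : (fun y : ∀ i, {m : ℤ // (m : ZMod 2) = c i} =>
      ∏ i, q ^ ((y i : ℤ)).natAbs) =
      fun y => q ^ (∑ i, ((y i : ℤ)).natAbs) := by
    funext y
    rw [Finset.prod_pow_eq_pow_sum]
  rw [hfun] at key
  convert key using 1
  rw [Finset.prod_mul_distrib, Finset.prod_const, Finset.card_univ, Fintype.card_fin]
  rw [Finset.prod_ite, Finset.prod_const, Finset.prod_const]
  have hcard : (Finset.filter (fun i => c i = 0) Finset.univ).card
      = n - (Finset.filter (fun i => c i ≠ 0) Finset.univ).card := by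
    have := Finset.card_filter_add_card_filter_not
      (s := (Finset.univ : Finset (Fin n))) (p := fun i => c i = 0)
    simp only [Finset.card_univ, Fintype.card_fin] at this
    have h2 : (Finset.filter (fun i => ¬ c i = 0) Finset.univ).card
        = (Finset.filter (fun i => c i ≠ 0) Finset.univ).card := rfl
    omega
  rw [hcard]
  have h2 : (Finset.filter (fun i => ¬ c i = 0) Finset.univ).card
      = (Finset.filter (fun i => c i ≠ 0) Finset.univ).card := rfl
  rw [h2]
  ring


def latticeMap (n : ℕ) (C : Submodule ℤ (Fin n → ZMod 2))
    (x : {x : Fin n → ℤ // (fun i => ((x i : ℤ) : ZMod 2)) ∈ C}) : C :=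
  ⟨fun i => ((x.1 i : ℤ) : ZMod 2), x.2⟩

def fiberPiEquiv (n : ℕ) (C : Submodule ℤ (Fin n → ZMod 2)) (c : C) :
    {x : {x : Fin n → ℤ // (fun i => ((x i : ℤ) : ZMod 2)) ∈ C} // latticeMap n C x = c} ≃
      (∀ i, {m : ℤ // (m : ZMod 2) = (c : Fin n → ZMod 2) i}) where
  toFun x i := ⟨x.1.1 i, congrFun (congrArg Subtype.val x.2) i⟩
  invFun y := ⟨⟨fun i => (y i).1, by
      rw [show (fun i => (((y i : ℤ) : ZMod 2))) = ((c : Fin n → ZMod 2))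
        from funext fun i => (y i).2]
      exact c.2⟩,
    Subtype.ext (funext fun i => (y i).2)⟩
  left_inv x := Subtype.ext (Subtype.ext rfl)
  right_inv y := funext fun i => Subtype.ext rfl


set_option maxHeartbeats 800000 in
lemma hfib_test (n : ℕ) (C : Submodule ℤ (Fin n → ZMod 2))
    (q : ℝ) (hq0 : 0 ≤ q) (hq1 : q < 1) (c : C) :
    HasSum (fun x : {x : {x : Fin n → ℤ // (fun i => ((x i : ℤ) : ZMod 2)) ∈ C} //
        latticeMap n C x = c} => q ^ (∑ i, (x.1.1 i).natAbs))
      ((1 - q ^ 2)⁻¹ ^ n *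
        ((1 + q ^ 2) ^ (n - (Finset.univ.filter
            fun i => ((c : Fin n → ZMod 2)) i ≠ 0).card) *
          (2 * q) ^ (Finset.univ.filter
            fun i => ((c : Fin n → ZMod 2)) i ≠ 0).card)) := by
  have h1 := fiber_hasSum hq0 hq1 ((c : Fin n → ZMod 2))
  have h2 := (fiberPiEquiv n C c).hasSum_iff.mpr h1
  convert h2 using 2
  rfl

set_option maxHeartbeats 1000000 in
/-- Theorem: ℓ¹-theta function of a binary Construction A lattice via the
Hamming weight enumerator. -/
theorem theta_one_constructionA_binary
    (n : ℕ) (C : Submodule ℤ (Fin n → ZMod 2))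
    (q : ℝ) (hq0 : 0 ≤ q) (hq1 : q < 1) :
    (∑' x : {x : Fin n → ℤ // (fun i => ((x i : ℤ) : ZMod 2)) ∈ C},
        q ^ (∑ i, (x.val i).natAbs))
      = (1 - q ^ 2)⁻¹ ^ n *
        ∑' c : C,
          (1 + q ^ 2) ^ (n - (Finset.univ.filter
              fun i => ((c : Fin n → ZMod 2)) i ≠ 0).card) *
          (2 * q) ^ (Finset.univ.filter
              fun i => ((c : Fin n → ZMod 2)) i ≠ 0).card := by
  classical
  letI : Fintype C := Fintype.ofFinite _
  let T : C → ℝ := fun c => (1 - q ^ 2)⁻¹ ^ n *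
    ((1 + q ^ 2) ^ (n - (Finset.univ.filter
        fun i => ((c : Fin n → ZMod 2)) i ≠ 0).card) *
      (2 * q) ^ (Finset.univ.filter
        fun i => ((c : Fin n → ZMod 2)) i ≠ 0).card)
  have hfib : ∀ c : C, HasSum
      (fun x : {x : {x : Fin n → ℤ // (fun i => ((x i : ℤ) : ZMod 2)) ∈ C} //
          latticeMap n C x = c} => q ^ (∑ i, (x.1.1 i).natAbs)) (T c) :=
    fun c => hfib_test n C q hq0 hq1 c
  have hsum : HasSum
      (fun p : Σ c : C, {x : {x : Fin n → ℤ // (fun i => ((x i : ℤ) : ZMod 2)) ∈ C} //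
          latticeMap n C x = c} => q ^ (∑ i, (p.2.1.1 i).natAbs))
      (∑ c, T c) := by
    refine HasSum.sigma_of_hasSum (hasSum_fintype T) (fun c => hfib c) ?_
    rw [summable_sigma_of_nonneg (fun _ => pow_nonneg hq0 _)]
    exact ⟨fun c => (hfib c).summable, Summable.of_finite⟩
  have final : HasSum
      (fun x : {x : Fin n → ℤ // (fun i => ((x i : ℤ) : ZMod 2)) ∈ C} =>
        q ^ (∑ i, (x.val i).natAbs)) (∑ c, T c) := by
    have h3 := (Equiv.sigmaFiberEquiv (latticeMap n C)).hasSum_iff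
      (f := fun x : {x : Fin n → ℤ // (fun i => ((x i : ℤ) : ZMod 2)) ∈ C} =>
        q ^ (∑ i, (x.val i).natAbs)) (a := ∑ c, T c)
    refine h3.mp ?_
    convert hsum using 2
    rfl
  rw [final.tsum_eq, tsum_fintype, Finset.mul_sum]
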